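/- Let c > 0, t₀ ∈ ℝ, and a, b > 0. Let y : ℝ → ℝ be twice differentiable on [t₀, ∞) satisfying y''(t) ≥ c² · y(t) > 0 for all t ≥ t₀, with y(t₀) = a and y'(t₀) ≥ b. Then for every t ≥ t₀ one has y(t) ≥ a · cosh(c(t − t₀)) + (b / c) · sinh(c(t − t₀)). -/

import Mathlib

open Set Real

/-- Explicit form of Lemma 3.5: `y(t) ≥ a cosh(c(t-t₀)) + (b/c) sinh(c(t-t₀))`. -/
theorem stmt1 (c t₀ a b : ℝ) (hc : 0 < c) (ha : 0 < a) (hb : 0 < b)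
    (y y' y'' : ℝ → ℝ)
    (hy1 : ∀ t ∈ Ici t₀, HasDerivWithinAt y (y' t) (Ici t₀) t)
    (hy2 : ∀ t ∈ Ici t₀, HasDerivWithinAt y' (y'' t) (Ici t₀) t)
    (hineq : ∀ t ∈ Ici t₀, c ^ 2 * y t ≤ y'' t)
    (hypos : ∀ t ∈ Ici t₀, 0 < y t)
    (hinit : y t₀ = a)
    (hinit' : b ≤ y' t₀) :
    ∀ t ∈ Ici t₀,
      a * Real.cosh (c * (t - t₀)) + (b / c) * Real.sinh (c * (t - t₀)) ≤ y t := by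
  have hc' : c ≠ 0 := hc.ne'
  set Y : ℝ → ℝ := fun t => a * Real.cosh (c * (t - t₀)) + (b / c) * Real.sinh (c * (t - t₀))
    with hY
  set Y' : ℝ → ℝ := fun t => a * c * Real.sinh (c * (t - t₀)) + b * Real.cosh (c * (t - t₀))
    with hY'
  have hu : ∀ t : ℝ, HasDerivAt (fun s => c * (s - t₀)) c t := by
    intro t
    simpa using ((hasDerivAt_id t).sub_const t₀).const_mul c
  have hYd : ∀ t : ℝ, HasDerivAt Y (Y' t) t := by
    intro t
    have h1 : HasDerivAt (fun s => Real.cosh (c * (s - t₀)))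
        (Real.sinh (c * (t - t₀)) * c) t :=
      (Real.hasDerivAt_cosh _).comp t (hu t)
    have h2 : HasDerivAt (fun s => Real.sinh (c * (s - t₀)))
        (Real.cosh (c * (t - t₀)) * c) t :=
      (Real.hasDerivAt_sinh _).comp t (hu t)
    have := (h1.const_mul a).add (h2.const_mul (b / c))
    refine this.congr_deriv ?_
    field_simp
    ring
  have hYd' : ∀ t : ℝ, HasDerivAt Y' (c ^ 2 * Y t) t := by
    intro t
    have h1 : HasDerivAt (fun s => Real.sinh (c * (s - t₀)))
        (Real.cosh (c * (t - t₀)) * c) t :=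
      (Real.hasDerivAt_sinh _).comp t (hu t)
    have h2 : HasDerivAt (fun s => Real.cosh (c * (s - t₀)))
        (Real.sinh (c * (t - t₀)) * c) t :=
      (Real.hasDerivAt_cosh _).comp t (hu t)
    have := (h1.const_mul (a * c)).add (h2.const_mul b)
    refine this.congr_deriv ?_
    simp only [hY]
    field_simp
  -- first integrating factor: f t = exp(-(c*t)) * (y' t - Y' t + c * (y t - Y t))
  set f : ℝ → ℝ := fun t => Real.exp (-(c * t)) * (y' t - Y' t + c * (y t - Y t)) with hf
  have hfd : ∀ t ∈ Ici t₀, HasDerivWithinAt f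
      (Real.exp (-(c * t)) * (y'' t - c ^ 2 * y t)) (Ici t₀) t := by
    intro t ht
    have he : HasDerivWithinAt (fun s => Real.exp (-(c * s)))
        (Real.exp (-(c * t)) * (-c)) (Ici t₀) t := by
      have : HasDerivAt (fun s => Real.exp (-(c * s))) (Real.exp (-(c * t)) * (-c)) t := by
        simpa using (((hasDerivAt_id t).const_mul c).neg).exp
      exact this.hasDerivWithinAt
    have hg : HasDerivWithinAt (fun s => y' s - Y' s + c * (y s - Y s))
        (y'' t - c ^ 2 * Y t + c * (y' t - Y' t)) (Ici t₀) t :=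
      ((hy2 t ht).sub (hYd' t).hasDerivWithinAt).add
        (((hy1 t ht).sub (hYd t).hasDerivWithinAt).const_mul c)
    have := he.mul hg
    refine this.congr_deriv ?_
    ring
  have hfmono : MonotoneOn f (Ici t₀) := by
    apply monotoneOn_of_hasDerivWithinAt_nonneg (convex_Ici t₀)
    · exact fun t ht => (hfd t ht).continuousWithinAt
    · intro t ht
      rw [interior_Ici] at ht ⊢
      exact (hfd t (le_of_lt ht : t₀ ≤ t)).mono Ioi_subset_Ici_self
    · intro t ht
      rw [interior_Ici] at ht
      have h := hineq t (le_of_lt ht : t₀ ≤ t)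
      have := Real.exp_pos (-(c * t))
      nlinarith
  have hf0 : 0 ≤ f t₀ := by
    have hY0 : Y t₀ = a := by simp [hY]
    have hY0' : Y' t₀ = b := by simp [hY']
    have : 0 ≤ y' t₀ - Y' t₀ + c * (y t₀ - Y t₀) := by
      rw [hY0, hY0', hinit]; linarith
    have := mul_nonneg (Real.exp_pos (-(c * t₀))).le this
    simpa [hf] using this
  have key : ∀ t ∈ Ici t₀, 0 ≤ y' t - Y' t + c * (y t - Y t) := by
    intro t ht
    have h1 : f t₀ ≤ f t := hfmono self_mem_Ici ht ht
    have h2 : 0 ≤ f t := le_trans hf0 h1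
    have hep := Real.exp_pos (-(c * t))
    change 0 ≤ Real.exp (-(c * t)) * (y' t - Y' t + c * (y t - Y t)) at h2
    nlinarith
  -- second integrating factor: g t = exp (c*t) * (y t - Y t)
  set g : ℝ → ℝ := fun t => Real.exp (c * t) * (y t - Y t) with hg
  have hgd : ∀ t ∈ Ici t₀, HasDerivWithinAt g
      (Real.exp (c * t) * (y' t - Y' t + c * (y t - Y t))) (Ici t₀) t := by
    intro t ht
    have he : HasDerivWithinAt (fun s => Real.exp (c * s))
        (Real.exp (c * t) * c) (Ici t₀) t := by
      have : HasDerivAt (fun s => Real.exp (c * s)) (Real.exp (c * t) * c) t := by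
        simpa using ((hasDerivAt_id t).const_mul c).exp
      exact this.hasDerivWithinAt
    have h2 : HasDerivWithinAt (fun s => y s - Y s) (y' t - Y' t) (Ici t₀) t :=
      (hy1 t ht).sub (hYd t).hasDerivWithinAt
    have := he.mul h2
    refine this.congr_deriv ?_
    ring
  have hgmono : MonotoneOn g (Ici t₀) := by
    apply monotoneOn_of_hasDerivWithinAt_nonneg (convex_Ici t₀)
    · exact fun t ht => (hgd t ht).continuousWithinAt
    · intro t ht
      rw [interior_Ici] at ht ⊢
      exact (hgd t (le_of_lt ht : t₀ ≤ t)).mono Ioi_subset_Ici_self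
    · intro t ht
      rw [interior_Ici] at ht
      exact mul_nonneg (Real.exp_pos _).le (key t (le_of_lt ht : t₀ ≤ t))
  intro t ht
  have hg0 : g t₀ = 0 := by
    have hY0 : Y t₀ = a := by simp [hY]
    simp [hg, hY0, hinit]
  have h1 : g t₀ ≤ g t := hgmono self_mem_Ici ht ht
  rw [hg0] at h1
  change 0 ≤ Real.exp (c * t) * (y t - Y t) at h1
  have hep := Real.exp_pos (c * t)
  show Y t ≤ y t
  nlinarith
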